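/- Let {E_λ}_{λ∈Λ} be a net of normal completely positive maps from a von Neumann algebra M to a von Neumann algebra N which is CP-increasing (E_{λ₁} ⪯ E_{λ₂} when λ₁ ≤ λ₂) and CP-bounded (there is a normal CP map F with E_λ ⪯ F for all λ). Then there exists a unique normal completely positive map E : M → N such that E_λ(A) → E(A) in the weak* topology for all A ∈ M; moreover E is the least upper bound of the net with respect to the order ⪯. -/

import Mathlib

open scoped ComplexOrder InnerProductSpace
open Filter Topology ContinuousLinearMap

set_option synthInstance.maxHeartbeats 1000000
set_option maxHeartbeats 1000000

noncomputable section

namespace QSM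

noncomputable instance piLpComplete (ι : Type*) (E : Type*) [NormedAddCommGroup E]
    [CompleteSpace E] : CompleteSpace (PiLp 2 fun _ : ι => E) :=
  inferInstance

variable {H K : Type*}
  [NormedAddCommGroup H] [InnerProductSpace ℂ H] [CompleteSpace H]
  [NormedAddCommGroup K] [InnerProductSpace ℂ K] [CompleteSpace K]

/-- Sequential/net convergence in the weak operator topology. -/
def WOTto {E F : Type*} [NormedAddCommGroup E] [InnerProductSpace ℂ E]
    [NormedAddCommGroup F] [InnerProductSpace ℂ F]
    {ι : Type*} [Preorder ι] (T : ι → (E →L[ℂ] F)) (T' : E →L[ℂ] F) : Prop :=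
  ∀ x y, Tendsto (fun n => ⟪x, T n y⟫_ℂ) atTop (𝓝 ⟪x, T' y⟫_ℂ)

section MatOp

variable {ι : Type*} [Fintype ι] [DecidableEq ι]
variable {E F : Type*} [NormedAddCommGroup E] [InnerProductSpace ℂ E]
  [NormedAddCommGroup F] [InnerProductSpace ℂ F]

/-- The `j`-th coordinate projection on the Hilbert space direct sum. -/
def projCLM (E : Type*) [NormedAddCommGroup E] [InnerProductSpace ℂ E] (j : ι) :
    (PiLp 2 fun _ : ι => E) →L[ℂ] E :=
  (ContinuousLinearMap.proj j).comp (PiLp.continuousLinearEquiv 2 ℂ _).toContinuousLinearMap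

/-- The `i`-th coordinate inclusion into the Hilbert space direct sum. -/
def inclCLM (E : Type*) [NormedAddCommGroup E] [InnerProductSpace ℂ E] (i : ι) :
    E →L[ℂ] (PiLp 2 fun _ : ι => E) :=
  ((PiLp.continuousLinearEquiv 2 ℂ _).symm.toContinuousLinearMap).comp
    (ContinuousLinearMap.pi fun j => if j = i then ContinuousLinearMap.id ℂ E else 0)

/-- The operator on the `n`-fold Hilbert space direct sum determined by a matrix of operators.
This realizes the identification `Mₙ(B(E)) = B(Eⁿ)` used for amplifications. -/
def matOp (T : ι → ι → (E →L[ℂ] F)) : (PiLp 2 fun _ : ι => E) →L[ℂ] (PiLp 2 fun _ : ι => F) :=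
  ∑ i, ∑ j, (inclCLM F i).comp ((T i j).comp (projCLM E j))

end MatOp

variable (S : StarSubalgebra ℂ (H →L[ℂ] H))

/-- A linear map `Φ : S → B(K)` is completely positive if all of its amplifications
map positive matrices over `S` to positive operators. -/
def IsCPMap (Φ : S →ₗ[ℂ] (K →L[ℂ] K)) : Prop :=
  ∀ (n : ℕ) (a : Matrix (Fin n) (Fin n) S),
    (matOp fun i j => (a i j : H →L[ℂ] H)).IsPositive →
    (matOp fun i j => Φ (a i j)).IsPositive

/-- A linear map `Φ : S → B(K)` is completely bounded with complete bound `C` if all of its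
amplifications have norm at most `C` times the norm of the input matrix. -/
def IsCBMap (Φ : S →ₗ[ℂ] (K →L[ℂ] K)) (C : ℝ) : Prop :=
  ∀ (n : ℕ) (a : Matrix (Fin n) (Fin n) S),
    ‖matOp fun i j => Φ (a i j)‖ ≤ C * ‖matOp fun i j => (a i j : H →L[ℂ] H)‖

/-- Weak*-continuity (equivalently, for positive maps, normality) of a map `Φ : S → B(K)`:
`Φ` maps bounded weak-operator convergent sequences to weak-operator convergent sequences.
(On bounded sets of `B(H)`, `H` separable, the weak* topology coincides with the weak operator
topology and is metrizable, so sequences suffice.) -/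
def WStarCont (Φ : S →ₗ[ℂ] (K →L[ℂ] K)) : Prop :=
  ∀ (A : ℕ → S) (A' : S) (c : ℝ),
    (∀ n, ‖(A n : H →L[ℂ] H)‖ ≤ c) →
    WOTto (fun n => (A n : H →L[ℂ] H)) (A' : H →L[ℂ] H) →
    WOTto (fun n => Φ (A n)) (Φ A')

/-- A normal completely positive map. -/
def NormalCP (Φ : S →ₗ[ℂ] (K →L[ℂ] K)) : Prop :=
  IsCPMap S Φ ∧ WStarCont S Φ

/-- The cone ordering on maps: `Φ ⪯ Ψ` iff `Ψ - Φ` is a normal CP map. -/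
def CPle (Φ Ψ : S →ₗ[ℂ] (K →L[ℂ] K)) : Prop := NormalCP S (Ψ - Φ)

/-- A quantum channel into the von Neumann algebra `N`: a unital normal CP map with range in
`N`. -/
def IsChannel (N : VonNeumannAlgebra K) (Φ : S →ₗ[ℂ] (K →L[ℂ] K)) : Prop :=
  NormalCP S Φ ∧ (∀ X, Φ X ∈ N) ∧ Φ 1 = 1

/-- The elementary map `E ⊙ F : S → B(K)`, `A ↦ E A F`, for `E ∈ B(H,K)`, `F ∈ B(K,H)`. -/
def sandwichMap (L : H →L[ℂ] K) (R : K →L[ℂ] H) : S →ₗ[ℂ] (K →L[ℂ] K) where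
  toFun A := L ∘L ((A : H →L[ℂ] H) ∘L R)
  map_add' a b := by simp [add_comp, comp_add]
  map_smul' c a := by simp [smul_comp, comp_smulₛₗ]


/-- `B(H)` itself, regarded as a von Neumann algebra on `H`. -/
def topVN (H : Type*) [NormedAddCommGroup H] [InnerProductSpace ℂ H] [CompleteSpace H] :
    VonNeumannAlgebra H where
  toStarSubalgebra := ⊤
  centralizer_centralizer' := by
    show Set.centralizer (Set.centralizer ((⊤ : StarSubalgebra ℂ (H →L[ℂ] H)) : Set (H →L[ℂ] H)))
      = ((⊤ : StarSubalgebra ℂ (H →L[ℂ] H)) : Set (H →L[ℂ] H))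
    ext x
    simp only [Set.mem_centralizer_iff]
    constructor
    · intro _; simp
    · intro _ g hg
      exact (hg x (by simp)).symm

/-- The inclusion map `M ↪ B(H)` as a linear map. -/
def inclusionMap (M : VonNeumannAlgebra H) : M.toStarSubalgebra →ₗ[ℂ] (H →L[ℂ] H) where
  toFun A := (A : H →L[ℂ] H)
  map_add' _ _ := rfl
  map_smul' _ _ := rfl

theorem mem_topVN_sa {H : Type*} [NormedAddCommGroup H] [InnerProductSpace ℂ H]
    [CompleteSpace H] (a : H →L[ℂ] H) : a ∈ (topVN H).toStarSubalgebra := by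
  show a ∈ (⊤ : StarSubalgebra ℂ (H →L[ℂ] H))
  exact StarSubalgebra.mem_top

/-- The linear space of weak*-continuous completely bounded maps from `M` to `B(K)` with
values in `N`, realized (via the equality `CB = span CP` proved in the paper) as the linear
span of the normal completely positive maps from `M` into `N`. -/
def CBsp (M : VonNeumannAlgebra H) (N : VonNeumannAlgebra K) :
    Submodule ℂ (M.toStarSubalgebra →ₗ[ℂ] (K →L[ℂ] K)) :=
  Submodule.span ℂ {Φ | NormalCP M.toStarSubalgebra Φ ∧ ∀ X, Φ X ∈ N}

/-- `Eₙ ⇑ E` : the sequence `Eₙ` of normal CP maps is CP-increasing, CP-bounded by the normal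
CP map `E`, and converges pointwise to `E` in the weak operator topology (so that `E` is its
least upper bound). -/
def CPUp (E : ℕ → (S →ₗ[ℂ] (K →L[ℂ] K))) (E' : S →ₗ[ℂ] (K →L[ℂ] K)) : Prop :=
  (∀ n, NormalCP S (E n)) ∧ NormalCP S E' ∧
  (∀ n m, n ≤ m → CPle S (E n) (E m)) ∧ (∀ n, CPle S (E n) E') ∧
  ∀ X, WOTto (fun n => E n X) (E' X)

section Supermap

variable {H₁ K₁ H₂ K₂ : Type*}
  [NormedAddCommGroup H₁] [InnerProductSpace ℂ H₁] [CompleteSpace H₁]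
  [NormedAddCommGroup K₁] [InnerProductSpace ℂ K₁] [CompleteSpace K₁]
  [NormedAddCommGroup H₂] [InnerProductSpace ℂ H₂] [CompleteSpace H₂]
  [NormedAddCommGroup K₂] [InnerProductSpace ℂ K₂] [CompleteSpace K₂]
  {M₁ : VonNeumannAlgebra H₁} {N₁ : VonNeumannAlgebra K₁}
  {M₂ : VonNeumannAlgebra H₂} {N₂ : VonNeumannAlgebra K₂}

/-- Complete positivity of a supermap `Sm : CB(M₁,N₁) → CB(M₂,N₂)`: for every `n`, the
amplification `Iₙ ⊗ Sm` is positive.  Here a map `CB(M₁⁽ⁿ⁾,N₁⁽ⁿ⁾)` is encoded by its components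
`t k l i j ∈ CB(M₁,N₁)` under the identification `CB(M₁⁽ⁿ⁾,N₁⁽ⁿ⁾) = CB(Mₙ(ℂ),Mₙ(ℂ)) ⊗ CB(M₁,N₁)`,
and positivity of a map of matrix algebras means that it sends positive matrices (viewed as
operators on the direct sum via `matOp`) to positive matrices. -/
def SupCP (Sm : CBsp M₁ N₁ →ₗ[ℂ] CBsp M₂ N₂) : Prop :=
  ∀ (n : ℕ) (t : Fin n → Fin n → Fin n → Fin n → CBsp M₁ N₁),
    (∀ A : Matrix (Fin n) (Fin n) M₁.toStarSubalgebra,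
      (matOp fun i j => (A i j : H₁ →L[ℂ] H₁)).IsPositive →
      (matOp fun k l => ∑ i, ∑ j,
        ((t k l i j : M₁.toStarSubalgebra →ₗ[ℂ] (K₁ →L[ℂ] K₁)) (A i j))).IsPositive) →
    ∀ B : Matrix (Fin n) (Fin n) M₂.toStarSubalgebra,
      (matOp fun i j => (B i j : H₂ →L[ℂ] H₂)).IsPositive →
      (matOp fun k l => ∑ i, ∑ j,
        ((Sm (t k l i j) : M₂.toStarSubalgebra →ₗ[ℂ] (K₂ →L[ℂ] K₂)) (B i j))).IsPositive

/-- Normality of a supermap: `Sm` preserves least upper bounds of CP-increasing CP-bounded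
sequences. -/
def SupNormal (Sm : CBsp M₁ N₁ →ₗ[ℂ] CBsp M₂ N₂) : Prop :=
  ∀ (E : ℕ → CBsp M₁ N₁) (E' : CBsp M₁ N₁),
    CPUp M₁.toStarSubalgebra (fun n => (E n : M₁.toStarSubalgebra →ₗ[ℂ] (K₁ →L[ℂ] K₁)))
      (E' : M₁.toStarSubalgebra →ₗ[ℂ] (K₁ →L[ℂ] K₁)) →
    CPUp M₂.toStarSubalgebra (fun n => (Sm (E n) : M₂.toStarSubalgebra →ₗ[ℂ] (K₂ →L[ℂ] K₂)))
      (Sm E' : M₂.toStarSubalgebra →ₗ[ℂ] (K₂ →L[ℂ] K₂))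

/-- A quantum supermap: a linear, completely positive, normal map between spaces of
weak*-continuous completely bounded maps. -/
def IsSupermap (Sm : CBsp M₁ N₁ →ₗ[ℂ] CBsp M₂ N₂) : Prop :=
  SupCP Sm ∧ SupNormal Sm

/-- A deterministic quantum supermap: a quantum supermap mapping quantum channels to quantum
channels. -/
def IsDetSupermap (Sm : CBsp M₁ N₁ →ₗ[ℂ] CBsp M₂ N₂) : Prop :=
  IsSupermap Sm ∧
  ∀ E : CBsp M₁ N₁,
    IsChannel M₁.toStarSubalgebra N₁ (E : M₁.toStarSubalgebra →ₗ[ℂ] (K₁ →L[ℂ] K₁)) →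
    IsChannel M₂.toStarSubalgebra N₂ (Sm E : M₂.toStarSubalgebra →ₗ[ℂ] (K₂ →L[ℂ] K₂))

end Supermap

/-- The Loewner order on bounded operators. -/
def opLE {E : Type*} [NormedAddCommGroup E] [InnerProductSpace ℂ E] [CompleteSpace E]
    (a b : E →L[ℂ] E) : Prop := (b - a).IsPositive

/-- Least upper bounds for the Loewner order. -/
def opIsLUB {E : Type*} [NormedAddCommGroup E] [InnerProductSpace ℂ E] [CompleteSpace E]
    (s : Set (E →L[ℂ] E)) (a : E →L[ℂ] E) : Prop :=
  (∀ b ∈ s, opLE b a) ∧ ∀ c, (∀ b ∈ s, opLE b c) → opLE a c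

section Tensor

/-- A realization of the Hilbert space tensor product `H₁ ⊗ H₂` : a Hilbert space `G` together
with a bilinear map `t : H₁ × H₂ → G` with total range and satisfying the characteristic
inner product identity. -/
structure TensorStruct (H₁ H₂ G : Type*) [NormedAddCommGroup H₁] [InnerProductSpace ℂ H₁]
    [NormedAddCommGroup H₂] [InnerProductSpace ℂ H₂]
    [NormedAddCommGroup G] [InnerProductSpace ℂ G] : Type _ where
  t : H₁ →ₗ[ℂ] H₂ →ₗ[ℂ] G
  inner_t : ∀ x y v w, ⟪t x v, t y w⟫_ℂ = ⟪x, y⟫_ℂ * ⟪v, w⟫_ℂ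
  dense_t : Dense (↑(Submodule.span ℂ {g | ∃ x v, g = t x v}) : Set G)

variable {H₁ H₂ G : Type*}
  [NormedAddCommGroup H₁] [InnerProductSpace ℂ H₁] [CompleteSpace H₁]
  [NormedAddCommGroup H₂] [InnerProductSpace ℂ H₂] [CompleteSpace H₂]
  [NormedAddCommGroup G] [InnerProductSpace ℂ G] [CompleteSpace G]

/-- The set of elementary tensors `a ⊗ b`, `a ∈ M`, `b ∈ N`, inside `B(H₁ ⊗ H₂)`. -/
def elemT (τ : TensorStruct H₁ H₂ G) (M : VonNeumannAlgebra H₁) (N : VonNeumannAlgebra H₂) :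
    Set (G →L[ℂ] G) :=
  {c | ∃ a ∈ M, ∃ b ∈ N, ∀ x v, c (τ.t x v) = τ.t (a x) (b v)}

/-- The von Neumann algebra tensor product `M ⊗̄ N`, realized as the double commutant of the
set of elementary tensors. -/
def vnT (τ : TensorStruct H₁ H₂ G) (M : VonNeumannAlgebra H₁) (N : VonNeumannAlgebra H₂) :
    VonNeumannAlgebra G where
  toStarSubalgebra := StarSubalgebra.centralizer ℂ
    ((StarSubalgebra.centralizer ℂ (elemT τ M N) :
        StarSubalgebra ℂ (G →L[ℂ] G)) : Set (G →L[ℂ] G))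
  centralizer_centralizer' := by
    show Set.centralizer (Set.centralizer ((StarSubalgebra.centralizer ℂ
        ((StarSubalgebra.centralizer ℂ (elemT τ M N) :
          StarSubalgebra ℂ (G →L[ℂ] G)) : Set (G →L[ℂ] G))) : Set (G →L[ℂ] G)))
      = ((StarSubalgebra.centralizer ℂ
        ((StarSubalgebra.centralizer ℂ (elemT τ M N) :
          StarSubalgebra ℂ (G →L[ℂ] G)) : Set (G →L[ℂ] G))) : Set (G →L[ℂ] G))
    rw [StarSubalgebra.coe_centralizer_centralizer]
    exact Set.centralizer_centralizer_centralizer _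

end Tensor

section Amp

variable {H₁ K₁ H₂ K₂ V G G' : Type*}
  [NormedAddCommGroup H₁] [InnerProductSpace ℂ H₁] [CompleteSpace H₁]
  [NormedAddCommGroup K₁] [InnerProductSpace ℂ K₁] [CompleteSpace K₁]
  [NormedAddCommGroup H₂] [InnerProductSpace ℂ H₂] [CompleteSpace H₂]
  [NormedAddCommGroup K₂] [InnerProductSpace ℂ K₂] [CompleteSpace K₂]
  [NormedAddCommGroup V] [InnerProductSpace ℂ V] [CompleteSpace V]
  [NormedAddCommGroup G] [InnerProductSpace ℂ G] [CompleteSpace G]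
  [NormedAddCommGroup G'] [InnerProductSpace ℂ G'] [CompleteSpace G']

/-- `Ē` is the amplification `E ⊗ id_{B(V)} : M ⊗̄ B(V) → B(K₁ ⊗ V)` of the
weak*-continuous completely bounded map `E : M → B(K₁)` : it is weak*-continuous and acts in
the expected way on elementary tensors. -/
def IsAmp (M : VonNeumannAlgebra H₁) (τ : TensorStruct H₁ V G) (κ : TensorStruct K₁ V G')
    (E : M.toStarSubalgebra →ₗ[ℂ] (K₁ →L[ℂ] K₁))
    (Ebar : (vnT τ M (topVN V)).toStarSubalgebra →ₗ[ℂ] (G' →L[ℂ] G')) : Prop :=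
  WStarCont (vnT τ M (topVN V)).toStarSubalgebra Ebar ∧
  ∀ (c : (vnT τ M (topVN V)).toStarSubalgebra) (a : H₁ →L[ℂ] H₁) (ha : a ∈ M) (b : V →L[ℂ] V),
    (∀ x v, (c : G →L[ℂ] G) (τ.t x v) = τ.t (a x) (b v)) →
    ∀ x v, (Ebar c) (κ.t x v) = κ.t ((E ⟨a, ha⟩) x) (b v)

/-- The triple `(V, W, F)` (presented through concrete realizations `τ`, `κ` of the Hilbert
tensor products `H₁ ⊗ V` and `K₁ ⊗ V`) is a dilation of the supermap `Sm`, i.e.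
`[Sm(E)](A) = W* [(E ⊗ id_V)(F(A))] W` for all `E ∈ CB(M₁, B(K₁))` and `A ∈ M₂`. -/
def DilatesTo (M₁ : VonNeumannAlgebra H₁) (M₂ : VonNeumannAlgebra H₂)
    (τ : TensorStruct H₁ V G) (κ : TensorStruct K₁ V G') (W : K₂ →L[ℂ] G')
    (F : M₂.toStarSubalgebra →ₗ[ℂ] (G →L[ℂ] G)) (hF : ∀ X, F X ∈ vnT τ M₁ (topVN V))
    (Sm : CBsp M₁ (topVN K₁) →ₗ[ℂ] CBsp M₂ (topVN K₂)) : Prop :=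
  ∀ E : CBsp M₁ (topVN K₁),
    ∃ Ebar, IsAmp M₁ τ κ (E : M₁.toStarSubalgebra →ₗ[ℂ] (K₁ →L[ℂ] K₁)) Ebar ∧
      ∀ A, (Sm E : M₂.toStarSubalgebra →ₗ[ℂ] (K₂ →L[ℂ] K₂)) A
        = (ContinuousLinearMap.adjoint W) ∘L ((Ebar ⟨F A, hF A⟩) ∘L W)

/-- Minimality of a dilation: `V = span closure of {(u* ⊗ I_V) W v | u ∈ K₁, v ∈ K₂}`. -/
def MinimalDil (κ : TensorStruct K₁ V G') (W : K₂ →L[ℂ] G') : Prop :=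
  Dense (↑(Submodule.span ℂ {w : V | ∃ (u : K₁) (v : K₂) (ℓ : G' →L[ℂ] V),
    (∀ k z, ℓ (κ.t k z) = ⟪u, k⟫_ℂ • z) ∧ w = ℓ (W v)}) : Set V)

end Amp

/-- A bundled separable complex Hilbert space. -/
structure HilbertSpaceStruct : Type 1 where
  carrier : Type
  [grp : NormedAddCommGroup carrier]
  [ipc : InnerProductSpace ℂ carrier]
  [cpl : CompleteSpace carrier]
  [sep : TopologicalSpace.SeparableSpace carrier]

attribute [instance] HilbertSpaceStruct.grp HilbertSpaceStruct.ipc HilbertSpaceStruct.cpl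
  HilbertSpaceStruct.sep


section Statement4Aux
set_option linter.unusedSectionVars false

variable {H K : Type*}
  [NormedAddCommGroup H] [InnerProductSpace ℂ H] [CompleteSpace H]
  [NormedAddCommGroup K] [InnerProductSpace ℂ K] [CompleteSpace K]

lemma isPositive_iff_inner {E : Type*} [NormedAddCommGroup E] [InnerProductSpace ℂ E]
    [CompleteSpace E] (T : E →L[ℂ] E) :
    T.IsPositive ↔ ∀ x, 0 ≤ ⟪T x, x⟫_ℂ := by
  rw [ContinuousLinearMap.isPositive_iff_complex]
  refine forall_congr' fun x => ?_
  constructor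
  · rintro ⟨h1, h2⟩
    rw [Complex.le_def]
    constructor
    · simpa using h2
    · have := congrArg Complex.im h1
      simpa using this
  · intro h
    rw [Complex.le_def] at h
    refine ⟨?_, by simpa using h.1⟩
    apply Complex.ext <;> simp [h.2.symm]

lemma isPositive_inner_right {E : Type*} [NormedAddCommGroup E] [InnerProductSpace ℂ E]
    [CompleteSpace E] {T : E →L[ℂ] E} (hT : T.IsPositive) (x : E) :
    0 ≤ ⟪x, T x⟫_ℂ := by
  have h := (isPositive_iff_inner T).1 hT x
  rwa [← inner_conj_symm, Complex.conj_eq_iff_im.2 ((Complex.le_def.1 h).2.symm)]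

section MatAux

variable {ι : Type*} [Fintype ι] [DecidableEq ι]
variable {E F : Type*} [NormedAddCommGroup E] [InnerProductSpace ℂ E]
  [NormedAddCommGroup F] [InnerProductSpace ℂ F]

lemma inclCLM_apply (i : ι) (w : F) (k : ι) :
    (inclCLM F i w : PiLp 2 fun _ : ι => F) k = if k = i then w else 0 := by
  show (if k = i then ContinuousLinearMap.id ℂ F else 0) w = _
  split <;> rfl

lemma inner_matOp_apply (T : ι → ι → (E →L[ℂ] F)) (x : PiLp 2 fun _ : ι => E)
    (y : PiLp 2 fun _ : ι => F) :
    ⟪matOp T x, y⟫_ℂ = ∑ i, ∑ j, ⟪T i j (x j), y i⟫_ℂ := by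
  rw [matOp]
  simp only [ContinuousLinearMap.sum_apply, sum_inner]
  refine Finset.sum_congr rfl fun i _ => Finset.sum_congr rfl fun j _ => ?_
  rw [ContinuousLinearMap.comp_apply, ContinuousLinearMap.comp_apply, PiLp.inner_apply]
  rw [Finset.sum_eq_single i]
  · rw [inclCLM_apply]; simp only [if_pos rfl]; rfl
  · intro k _ hk
    rw [inclCLM_apply, if_neg hk, inner_zero_left]
  · intro h; exact absurd (Finset.mem_univ i) h

lemma matOp_fin1_isPositive_iff [CompleteSpace E] (T : Fin 1 → Fin 1 → (E →L[ℂ] E)) :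
    (matOp T).IsPositive ↔ (T 0 0).IsPositive := by
  simp only [isPositive_iff_inner]
  constructor
  · intro h x
    have := h ((WithLp.equiv 2 (∀ _ : Fin 1, E)).symm fun _ => x)
    rwa [inner_matOp_apply, Fin.sum_univ_one, Fin.sum_univ_one] at this
  · intro h v
    rw [inner_matOp_apply, Fin.sum_univ_one, Fin.sum_univ_one]
    exact h (v 0)

end MatAux

variable {S : StarSubalgebra ℂ (H →L[ℂ] H)}

lemma IsCPMap.posMap {Φ : S →ₗ[ℂ] (K →L[ℂ] K)} (hΦ : IsCPMap S Φ) {b : S}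
    (hb : (b : H →L[ℂ] H).IsPositive) : (Φ b).IsPositive := by
  have := hΦ 1 (fun _ _ => b) (by
    rw [matOp_fin1_isPositive_iff]; exact hb)
  rwa [matOp_fin1_isPositive_iff] at this

lemma inner_self_ofReal {E : Type*} [NormedAddCommGroup E] [InnerProductSpace ℂ E] (v : E) :
    ⟪v, v⟫_ℂ = ((‖v‖ ^ 2 : ℝ) : ℂ) := by
  rw [inner_self_eq_norm_sq_to_K]
  norm_cast

lemma smul_one_add_isPositive {b : H →L[ℂ] H} (hb : IsSelfAdjoint b) {c : ℝ}
    (hc : ‖b‖ ≤ c) : ((c : ℂ) • 1 + b).IsPositive := by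
  rw [isPositive_iff_inner]
  intro x
  have h1 : ⟪b x, x⟫_ℂ = ⟪x, b x⟫_ℂ := hb.isSymmetric x x
  have him : (⟪b x, x⟫_ℂ).im = 0 := by
    rw [← Complex.conj_eq_iff_im, inner_conj_symm, h1]
  have hre : |(⟪b x, x⟫_ℂ).re| ≤ c * ‖x‖ ^ 2 := by
    calc |(⟪b x, x⟫_ℂ).re| ≤ ‖⟪b x, x⟫_ℂ‖ := Complex.abs_re_le_norm _
      _ ≤ ‖b x‖ * ‖x‖ := norm_inner_le_norm _ _
      _ ≤ (‖b‖ * ‖x‖) * ‖x‖ := by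
          exact mul_le_mul_of_nonneg_right (b.le_opNorm x) (norm_nonneg x)
      _ ≤ c * ‖x‖ ^ 2 := by nlinarith [norm_nonneg x, (norm_nonneg b).trans hc]
  have key : ⟪((c : ℂ) • 1 + b) x, x⟫_ℂ
      = ((c * ‖x‖ ^ 2 : ℝ) : ℂ) + ⟪b x, x⟫_ℂ := by
    rw [ContinuousLinearMap.add_apply, ContinuousLinearMap.smul_apply,
      ContinuousLinearMap.one_apply, inner_add_left, inner_smul_left,
      inner_self_ofReal]
    rw [Complex.conj_ofReal, Complex.ofReal_mul]
  rw [key, Complex.le_def]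
  constructor
  · simp only [Complex.add_re, Complex.ofReal_re, Complex.zero_re]
    have := abs_le.1 hre
    linarith [this.1]
  · simp only [Complex.add_im, Complex.ofReal_im, him, add_zero, Complex.zero_im]

lemma IsCPMap.selfAdjointMap {Φ : S →ₗ[ℂ] (K →L[ℂ] K)} (hΦ : IsCPMap S Φ) {b : S}
    (hb : IsSelfAdjoint (b : H →L[ℂ] H)) : IsSelfAdjoint (Φ b) := by
  set c : ℝ := ‖(b : H →L[ℂ] H)‖ with hc
  have hcoe₁ : (((c : ℂ) • 1 + b : S) : H →L[ℂ] H) = (c : ℂ) • 1 + (b : H →L[ℂ] H) := rfl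
  have hcoe₂ : (((c : ℂ) • 1 - b : S) : H →L[ℂ] H) = (c : ℂ) • 1 - (b : H →L[ℂ] H) := rfl
  have hp : (((c : ℂ) • 1 + b : S) : H →L[ℂ] H).IsPositive := by
    rw [hcoe₁]; exact smul_one_add_isPositive hb le_rfl
  have hq : (((c : ℂ) • 1 - b : S) : H →L[ℂ] H).IsPositive := by
    rw [hcoe₂, sub_eq_add_neg]
    exact smul_one_add_isPositive hb.neg (by rw [norm_neg])
  have h1 := (hΦ.posMap hp).isSelfAdjoint
  have h2 := (hΦ.posMap hq).isSelfAdjoint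
  have h3 : Φ ((c : ℂ) • 1 + b) - Φ ((c : ℂ) • 1 - b) = (2 : ℂ) • Φ b := by
    rw [← map_sub, ← map_smul]
    congr 1
    module
  have h4 : IsSelfAdjoint ((2 : ℂ) • Φ b) := h3 ▸ h1.sub h2
  have h5 : star ((2 : ℂ) • Φ b) = (2 : ℂ) • star (Φ b) := by
    rw [star_smul]
    norm_num
  rw [IsSelfAdjoint, h5] at h4
  exact smul_right_injective _ (by norm_num : (2 : ℂ) ≠ 0) h4

lemma IsCPMap.starMap {Φ : S →ₗ[ℂ] (K →L[ℂ] K)} (hΦ : IsCPMap S Φ) (b : S) :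
    Φ (star b) = star (Φ b) := by
  set b₁ : S := (2 : ℂ)⁻¹ • (b + star b) with hb₁
  set b₂ : S := (Complex.I * 2⁻¹) • (star b - b) with hb₂
  have hsb : star b = b₁ - Complex.I • b₂ := by
    rw [hb₁, hb₂, smul_smul]
    apply Subtype.ext
    show ((star b : S) : H →L[ℂ] H) = _
    push_cast
    match_scalars <;>
      norm_num [Complex.ext_iff, Complex.mul_re, Complex.mul_im, Complex.I_re, Complex.I_im]
  have hbb : b = b₁ + Complex.I • b₂ := by
    rw [hb₁, hb₂, smul_smul]
    apply Subtype.ext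
    show ((b : S) : H →L[ℂ] H) = _
    push_cast
    match_scalars <;>
      norm_num [Complex.ext_iff, Complex.mul_re, Complex.mul_im, Complex.I_re, Complex.I_im]
  have h1 : IsSelfAdjoint ((b₁ : S) : H →L[ℂ] H) := by
    show star _ = _
    rw [show ((b₁ : S) : H →L[ℂ] H)
        = (2 : ℂ)⁻¹ • ((b : H →L[ℂ] H) + star (b : H →L[ℂ] H)) from rfl,
      star_smul, star_add, star_star]
    rw [show star ((2 : ℂ)⁻¹) = (2 : ℂ)⁻¹ by simp [Complex.ext_iff], add_comm]
  have h2 : IsSelfAdjoint ((b₂ : S) : H →L[ℂ] H) := by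
    show star _ = _
    rw [show ((b₂ : S) : H →L[ℂ] H)
        = (Complex.I * 2⁻¹) • (star (b : H →L[ℂ] H) - (b : H →L[ℂ] H)) from rfl,
      star_smul, star_sub, star_star]
    rw [show star (Complex.I * 2⁻¹) = -(Complex.I * 2⁻¹) by simp [Complex.ext_iff]]
    module
  have e1 := hΦ.selfAdjointMap h1
  have e2 := hΦ.selfAdjointMap h2
  calc Φ (star b) = Φ b₁ - Complex.I • Φ b₂ := by
        rw [hsb]; simp only [map_sub, map_smul]
    _ = star (Φ b₁ + Complex.I • Φ b₂) := by
        rw [star_add, star_smul, e1.star_eq, e2.star_eq]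
        rw [show star (Complex.I) = -Complex.I from Complex.conj_I]
        module
    _ = star (Φ b) := by
        conv_rhs => rw [hbb]
        simp only [map_add, map_smul]

lemma matrix2_isPositive (b : S) :
    (matOp fun i j =>
      ((!![(‖(b : H →L[ℂ] H)‖ : ℂ) • 1, b; star b, (‖(b : H →L[ℂ] H)‖ : ℂ) • 1] :
        Matrix (Fin 2) (Fin 2) S) i j : H →L[ℂ] H)).IsPositive := by
  set c : ℝ := ‖(b : H →L[ℂ] H)‖ with hc
  rw [isPositive_iff_inner]
  intro v
  rw [inner_matOp_apply, Fin.sum_univ_two, Fin.sum_univ_two, Fin.sum_univ_two]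
  simp only [Matrix.cons_val', Matrix.cons_val_zero, Matrix.cons_val_one, Matrix.head_cons,
    Matrix.empty_val', Matrix.cons_val_fin_one, Matrix.head_fin_const, Matrix.of_apply]
  have hcoe : ∀ z : H, (((c : ℂ) • 1 : S) : H →L[ℂ] H) z = (c : ℂ) • z := fun _ => rfl
  have hstar : ∀ z : H, ((star b : S) : H →L[ℂ] H) z
      = (ContinuousLinearMap.adjoint (b : H →L[ℂ] H)) z := fun _ => rfl
  rw [hcoe, hcoe, hstar]
  rw [inner_smul_left, inner_smul_left, Complex.conj_ofReal,
    ContinuousLinearMap.adjoint_inner_left, inner_self_ofReal, inner_self_ofReal,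
    ← inner_conj_symm (v 0)]
  set z : ℂ := ⟪(b : H →L[ℂ] H) (v 1), v 0⟫_ℂ with hz
  have hb1 : ‖z‖ ≤ c * (‖v 0‖ * ‖v 1‖) := by
    calc ‖z‖ ≤ ‖(b : H →L[ℂ] H) (v 1)‖ * ‖v 0‖ := norm_inner_le_norm _ _
      _ ≤ (c * ‖v 1‖) * ‖v 0‖ := by
          exact mul_le_mul_of_nonneg_right ((b : H →L[ℂ] H).le_opNorm _) (norm_nonneg _)
      _ = c * (‖v 0‖ * ‖v 1‖) := by ring
  have key : (c : ℂ) * ((‖v 0‖ ^ 2 : ℝ) : ℂ) + z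
        + ((starRingEnd ℂ) z + (c : ℂ) * ((‖v 1‖ ^ 2 : ℝ) : ℂ))
      = ((c * ‖v 0‖ ^ 2 + c * ‖v 1‖ ^ 2 + 2 * z.re : ℝ) : ℂ) := by
    rw [show (c : ℂ) * ((‖v 0‖ ^ 2 : ℝ) : ℂ) + z
        + ((starRingEnd ℂ) z + (c : ℂ) * ((‖v 1‖ ^ 2 : ℝ) : ℂ))
        = ((c : ℂ) * ((‖v 0‖ ^ 2 : ℝ) : ℂ) + (c : ℂ) * ((‖v 1‖ ^ 2 : ℝ) : ℂ))
          + (z + (starRingEnd ℂ) z)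
        by ring, Complex.add_conj]
    push_cast
    ring
  rw [key]
  have habs := abs_le.1 (Complex.abs_re_le_norm z)
  have hzre : -(c * (‖v 0‖ * ‖v 1‖)) ≤ z.re := by
    have h1 : -‖z‖ ≤ z.re := by exact habs.1
    linarith
  have hc0 : (0 : ℝ) ≤ c := by rw [hc]; exact norm_nonneg _
  have hfin : (0 : ℝ) ≤ c * ‖v 0‖ ^ 2 + c * ‖v 1‖ ^ 2 + 2 * z.re := by
    nlinarith [mul_nonneg hc0 (sq_nonneg (‖v 0‖ - ‖v 1‖)), hzre]
  exact_mod_cast hfin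

lemma cp_inner_bound {Φ : S →ₗ[ℂ] (K →L[ℂ] K)} (hΦ : IsCPMap S Φ) (b : S) (x y : K) :
    ‖⟪x, Φ b y⟫_ℂ‖ ≤ ‖(b : H →L[ℂ] H)‖ / 2 *
      ((⟪x, Φ 1 x⟫_ℂ).re + (⟪y, Φ 1 y⟫_ℂ).re) := by
  set c : ℝ := ‖(b : H →L[ℂ] H)‖ with hc
  set α : ℂ := ⟪x, Φ b y⟫_ℂ with hα
  have h1pos := hΦ.posMap (b := 1)
    (by rw [show ((1 : S) : H →L[ℂ] H) = 1 from rfl]; exact ContinuousLinearMap.isPositive_one)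
  have hx0 : 0 ≤ (⟪x, Φ 1 x⟫_ℂ).re := (Complex.le_def.1 (isPositive_inner_right h1pos x)).1
  have hy0 : 0 ≤ (⟪y, Φ 1 y⟫_ℂ).re := (Complex.le_def.1 (isPositive_inner_right h1pos y)).1
  by_cases hα0 : α = 0
  · rw [hα0, norm_zero]
    have : 0 ≤ c := norm_nonneg _
    positivity
  -- the 2×2 positive matrix argument
  have hα' : (‖α‖ : ℝ) ≠ 0 := norm_ne_zero_iff.2 hα0
  set w : ℂ := -α / ‖α‖ with hw
  have hαα : α * (starRingEnd ℂ) α = ((‖α‖ ^ 2 : ℝ) : ℂ) := by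
    rw [Complex.mul_conj, Complex.normSq_eq_norm_sq]
  have hw1 : (starRingEnd ℂ) w * w = 1 := by
    rw [hw, map_div₀, map_neg, Complex.conj_ofReal, div_mul_div_comm, neg_mul_neg,
      mul_comm ((starRingEnd ℂ) α) α, hαα,
      show ((‖α‖ : ℂ) * (‖α‖ : ℂ)) = ((‖α‖ ^ 2 : ℝ) : ℂ) by push_cast; ring]
    exact div_self (by exact_mod_cast pow_ne_zero 2 hα')
  have hwα : w * (starRingEnd ℂ) α = -(‖α‖ : ℂ) := by
    rw [hw, div_mul_eq_mul_div, neg_mul, hαα, neg_div, neg_inj]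
    push_cast
    rw [sq]
    exact mul_div_cancel_right₀ _ (by exact_mod_cast hα')
  have hwα' : (starRingEnd ℂ) w * α = -(‖α‖ : ℂ) := by
    have h := congrArg (starRingEnd ℂ) hwα
    rwa [map_mul, Complex.conj_conj, map_neg, Complex.conj_ofReal] at h
  set v : PiLp 2 fun _ : Fin 2 => K :=
    (WithLp.equiv 2 (∀ _ : Fin 2, K)).symm ![w • x, y] with hv
  have hv0 : v 0 = w • x := rfl
  have hv1 : v 1 = y := rfl
  set r : ℂ := ⟪(Φ 1) x, x⟫_ℂ with hr
  set s : ℂ := ⟪(Φ 1) y, y⟫_ℂ with hs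
  have hP := hΦ 2 _ (matrix2_isPositive b)
  rw [isPositive_iff_inner] at hP
  have this0 := hP v
  have expand : ⟪(matOp fun i j => Φ
      ((!![(‖(b : H →L[ℂ] H)‖ : ℂ) • 1, b; star b, (‖(b : H →L[ℂ] H)‖ : ℂ) • 1] :
        Matrix (Fin 2) (Fin 2) S) i j)) v, v⟫_ℂ
      = (c : ℂ) * r - (‖α‖ : ℂ) - (‖α‖ : ℂ) + (c : ℂ) * s := by
    rw [inner_matOp_apply, Fin.sum_univ_two, Fin.sum_univ_two, Fin.sum_univ_two]
    simp only [Matrix.cons_val', Matrix.cons_val_zero, Matrix.cons_val_one, Matrix.head_cons,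
      Matrix.empty_val', Matrix.cons_val_fin_one, Matrix.head_fin_const, Matrix.of_apply]
    rw [← hc, map_smul, hΦ.starMap, hv0, hv1]
    have t00 : ⟪((c : ℂ) • (Φ 1)) (w • x), w • x⟫_ℂ = (c : ℂ) * r := by
      rw [ContinuousLinearMap.smul_apply, map_smul, inner_smul_left, inner_smul_left,
        inner_smul_right, Complex.conj_ofReal]
      rw [show (c : ℂ) * ((starRingEnd ℂ) w * (w * ⟪(Φ 1) x, x⟫_ℂ))
          = ((starRingEnd ℂ) w * w) * ((c : ℂ) * ⟪(Φ 1) x, x⟫_ℂ) by ring, hw1, one_mul, hr]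
    have t11 : ⟪((c : ℂ) • (Φ 1)) y, y⟫_ℂ = (c : ℂ) * s := by
      rw [ContinuousLinearMap.smul_apply, inner_smul_left, Complex.conj_ofReal, hs]

    have t01 : ⟪(Φ b) y, w • x⟫_ℂ = -(‖α‖ : ℂ) := by
      rw [inner_smul_right, ← inner_conj_symm, ← hα, hwα]
    have t10 : ⟪(star (Φ b)) (w • x), y⟫_ℂ = -(‖α‖ : ℂ) := by
      rw [show ((star (Φ b)) (w • x) : K) = (ContinuousLinearMap.adjoint (Φ b)) (w • x) from rfl,
        ContinuousLinearMap.adjoint_inner_left, inner_smul_left, ← hα, hwα']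
    rw [t00, t11, t01, t10]
    ring
  rw [expand] at this0
  have hre := (Complex.le_def.1 this0).1
  simp only [Complex.add_re, Complex.sub_re, Complex.zero_re, Complex.re_ofReal_mul,
    Complex.ofReal_re] at hre
  have hrx : r.re = (⟪x, Φ 1 x⟫_ℂ).re := by
    rw [hr, ← inner_conj_symm x, Complex.conj_re]
  have hry : s.re = (⟪y, Φ 1 y⟫_ℂ).re := by
    rw [hs, ← inner_conj_symm y, Complex.conj_re]
  rw [hrx, hry] at hre
  linarith

section NetAux

variable {Λ : Type*} [Preorder Λ] [Nonempty Λ] [IsDirected Λ (· ≤ ·)]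

lemma isCPMap_of_tendsto (Φ : Λ → (S →ₗ[ℂ] (K →L[ℂ] K))) (Φ' : S →ₗ[ℂ] (K →L[ℂ] K))
    (hcp : ∀ᶠ l in atTop, IsCPMap S (Φ l))
    (hconv : ∀ (X : S) (x y : K),
      Tendsto (fun l => ⟪x, (Φ l X) y⟫_ℂ) atTop (𝓝 ⟪x, (Φ' X) y⟫_ℂ)) :
    IsCPMap S Φ' := by
  haveI : (atTop : Filter Λ).NeBot := Filter.atTop_neBot
  intro n a ha
  rw [isPositive_iff_inner]
  intro v
  rw [inner_matOp_apply]
  have hterm : ∀ i j, Tendsto (fun l => ⟪(Φ l (a i j)) (v j), v i⟫_ℂ) atTop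
      (𝓝 ⟪(Φ' (a i j)) (v j), v i⟫_ℂ) := by
    intro i j
    have h := hconv (a i j) (v i) (v j)
    have h2 := (Complex.continuous_conj.tendsto _).comp h
    simpa only [Function.comp_def, inner_conj_symm] using h2
  have hsum : Tendsto (fun l => ∑ i, ∑ j, ⟪(Φ l (a i j)) (v j), v i⟫_ℂ) atTop
      (𝓝 (∑ i, ∑ j, ⟪(Φ' (a i j)) (v j), v i⟫_ℂ)) :=
    tendsto_finset_sum _ fun i _ => tendsto_finset_sum _ fun j _ => hterm i j
  have hev : ∀ᶠ l in atTop, 0 ≤ ∑ i, ∑ j, ⟪(Φ l (a i j)) (v j), v i⟫_ℂ := by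
    filter_upwards [hcp] with l hl
    have := (isPositive_iff_inner _).1 (hl n a ha) v
    rwa [inner_matOp_apply] at this
  rw [Complex.le_def]
  constructor
  · have hre : Tendsto (fun l => (∑ i, ∑ j, ⟪(Φ l (a i j)) (v j), v i⟫_ℂ).re) atTop
        (𝓝 (∑ i, ∑ j, ⟪(Φ' (a i j)) (v j), v i⟫_ℂ).re) :=
      (Complex.continuous_re.tendsto _).comp hsum
    have := ge_of_tendsto hre (hev.mono fun l h => (Complex.le_def.1 h).1)
    simpa using this
  · have him : Tendsto (fun l => (∑ i, ∑ j, ⟪(Φ l (a i j)) (v j), v i⟫_ℂ).im) atTop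
        (𝓝 (∑ i, ∑ j, ⟪(Φ' (a i j)) (v j), v i⟫_ℂ).im) :=
      (Complex.continuous_im.tendsto _).comp hsum
    have h2 : Tendsto (fun _ : Λ => (0 : ℝ)) atTop
        (𝓝 (∑ i, ∑ j, ⟪(Φ' (a i j)) (v j), v i⟫_ℂ).im) := by
      refine Filter.Tendsto.congr' ?_ him
      filter_upwards [hev] with l h
      exact ((Complex.le_def.1 h).2).symm
    have := tendsto_nhds_unique h2 tendsto_const_nhds
    simpa using this.symm

lemma WStarCont.sub' {Φ Ψ : S →ₗ[ℂ] (K →L[ℂ] K)} (hΦ : WStarCont S Φ)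
    (hΨ : WStarCont S Ψ) : WStarCont S (Φ - Ψ) := by
  intro A A' cb hb hconv x y
  have h1 := hΦ A A' cb hb hconv x y
  have h2 := hΨ A A' cb hb hconv x y
  simpa only [LinearMap.sub_apply, ContinuousLinearMap.sub_apply, inner_sub_right]
    using h1.sub h2

end NetAux

end Statement4Aux

/-- A CP-increasing CP-bounded net of normal CP maps from `M` to `N` has a
unique pointwise weak* limit, which is a normal CP map `M → N` and is the least upper bound
of the net for the CP order. -/
theorem statement4 {H K : Type*} [NormedAddCommGroup H] [InnerProductSpace ℂ H] [CompleteSpace H] [TopologicalSpace.SeparableSpace H] [NormedAddCommGroup K] [InnerProductSpace ℂ K] [CompleteSpace K] [TopologicalSpace.SeparableSpace K]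
    (M : VonNeumannAlgebra H) (N : VonNeumannAlgebra K)
    {Λ : Type*} [Preorder Λ] [Nonempty Λ] [IsDirected Λ (· ≤ ·)]
    (E : Λ → (M.toStarSubalgebra →ₗ[ℂ] (K →L[ℂ] K)))
    (hcp : ∀ l, NormalCP M.toStarSubalgebra (E l))
    (hrange : ∀ l X, E l X ∈ N)
    (hmono : ∀ l₁ l₂, l₁ ≤ l₂ → CPle M.toStarSubalgebra (E l₁) (E l₂))
    (hbdd : ∃ F, NormalCP M.toStarSubalgebra F ∧ (∀ X, F X ∈ N) ∧
      ∀ l, CPle M.toStarSubalgebra (E l) F) :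
    ∃! E' : M.toStarSubalgebra →ₗ[ℂ] (K →L[ℂ] K),
      NormalCP M.toStarSubalgebra E' ∧ (∀ X, E' X ∈ N) ∧
      (∀ X, WOTto (fun l => E l X) (E' X)) ∧
      (∀ l, CPle M.toStarSubalgebra (E l) E') ∧
      ∀ F, NormalCP M.toStarSubalgebra F → (∀ l, CPle M.toStarSubalgebra (E l) F) →
        CPle M.toStarSubalgebra E' F := by
  classical
  obtain ⟨F, hFcp, hFrange, hFle⟩ := hbdd
  haveI : (atTop : Filter Λ).NeBot := Filter.atTop_neBot
  set g : K → Λ → ℝ := fun x l => (⟪x, (E l 1) x⟫_ℂ).re with hgdef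
  have onePos : (((1 : M.toStarSubalgebra) : H →L[ℂ] H)).IsPositive := by
    rw [show ((1 : M.toStarSubalgebra) : H →L[ℂ] H) = 1 from rfl]
    exact ContinuousLinearMap.isPositive_one
  -- monotonicity of g
  have hgmono : ∀ x : K, Monotone (g x) := by
    intro x l₁ l₂ h
    have hpos := isPositive_inner_right (((hmono l₁ l₂ h).1).posMap onePos) x
    have := (Complex.le_def.1 hpos).1
    simp only [LinearMap.sub_apply, ContinuousLinearMap.sub_apply, inner_sub_right,
      Complex.sub_re, Complex.zero_re] at this
    simp only [hgdef]
    linarith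
  -- boundedness of g
  have hgbdd : ∀ (x : K) (l : Λ), g x l ≤ (⟪x, (F 1) x⟫_ℂ).re := by
    intro x l
    have hpos := isPositive_inner_right (((hFle l).1).posMap onePos) x
    have := (Complex.le_def.1 hpos).1
    simp only [LinearMap.sub_apply, ContinuousLinearMap.sub_apply, inner_sub_right,
      Complex.sub_re, Complex.zero_re] at this
    simp only [hgdef]
    linarith
  have hgtendsto : ∀ x : K, ∃ r : ℝ, Tendsto (g x) atTop (𝓝 r) := by
    intro x
    exact ⟨_, tendsto_atTop_ciSup (hgmono x)
      ⟨(⟪x, (F 1) x⟫_ℂ).re, Set.forall_mem_range.2 fun l => hgbdd x l⟩⟩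
  -- the difference bound
  have hdiff : ∀ (X : M.toStarSubalgebra) (x y : K) (l m : Λ), l ≤ m →
      ‖⟪x, (E m X) y⟫_ℂ - ⟪x, (E l X) y⟫_ℂ‖ ≤ ‖(X : H →L[ℂ] H)‖ / 2 *
        ((g x m - g x l) + (g y m - g y l)) := by
    intro X x y l m hlm
    have h := cp_inner_bound ((hmono l m hlm).1) X x y
    simp only [LinearMap.sub_apply, ContinuousLinearMap.sub_apply, inner_sub_right,
      Complex.sub_re] at h
    simpa only [hgdef] using h
  -- Cauchy property
  have hCauchy : ∀ (X : M.toStarSubalgebra) (x y : K),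
      ∃ z : ℂ, Tendsto (fun l => ⟪x, (E l X) y⟫_ℂ) atTop (𝓝 z) := by
    intro X x y
    apply cauchySeq_tendsto_of_complete
    refine Metric.cauchy_iff.2 ⟨Filter.map_neBot, ?_⟩
    intro ε hε
    obtain ⟨rx, hrx⟩ := hgtendsto x
    obtain ⟨ry, hry⟩ := hgtendsto y
    set cX : ℝ := ‖(X : H →L[ℂ] H)‖ with hcX
    have hcX0 : 0 ≤ cX := norm_nonneg _
    set δ : ℝ := ε / (4 * (cX + 1) + 1) with hδdef
    have hδ : 0 < δ := by
      apply div_pos hε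
      linarith
    have hevx := Metric.tendsto_nhds.1 hrx δ hδ
    have hevy := Metric.tendsto_nhds.1 hry δ hδ
    obtain ⟨sx, hsxmem, hsx⟩ := hevx.exists_mem
    obtain ⟨sy, hsymem, hsy⟩ := hevy.exists_mem
    obtain ⟨lx, hlx⟩ := Filter.mem_atTop_sets.1 hsxmem
    obtain ⟨ly, hly⟩ := Filter.mem_atTop_sets.1 hsymem
    obtain ⟨l₀, hl₀x, hl₀y⟩ := exists_ge_ge lx ly
    have hclose : ∀ m, l₀ ≤ m → |g x m - rx| < δ ∧ |g y m - ry| < δ := by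
      intro m hm
      constructor
      · have := hsx m (hlx m (le_trans hl₀x hm))
        rwa [Real.dist_eq] at this
      · have := hsy m (hly m (le_trans hl₀y hm))
        rwa [Real.dist_eq] at this
    refine ⟨(fun l => ⟪x, (E l X) y⟫_ℂ) '' Set.Ici l₀,
      Filter.image_mem_map (Filter.Ici_mem_atTop l₀), ?_⟩
    rintro z1 ⟨m, hm, rfl⟩ z2 ⟨m', hm', rfl⟩
    obtain ⟨p, hmp, hm'p⟩ := exists_ge_ge m m'
    have hm0 : l₀ ≤ m := Set.mem_Ici.1 hm
    have hm0' : l₀ ≤ m' := Set.mem_Ici.1 hm'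
    have hp : l₀ ≤ p := le_trans hm0 hmp
    have est : ∀ q, l₀ ≤ q → q ≤ p →
        ‖⟪x, (E p X) y⟫_ℂ - ⟪x, (E q X) y⟫_ℂ‖ ≤ cX / 2 * (2 * δ + 2 * δ) := by
      intro q hq hqp
      refine le_trans (hdiff X x y q p hqp) ?_
      have h1 := (hclose p hp).1
      have h2 := (hclose p hp).2
      have h3 := (hclose q hq).1
      have h4 := (hclose q hq).2
      obtain ⟨a1, a2⟩ := abs_le.1 (le_of_lt h1)
      obtain ⟨a3, a4⟩ := abs_le.1 (le_of_lt h3)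
      obtain ⟨b1, b2⟩ := abs_le.1 (le_of_lt h2)
      obtain ⟨b3, b4⟩ := abs_le.1 (le_of_lt h4)
      have e1 : g x p - g x q ≤ 2 * δ := by linarith
      have e2 : g y p - g y q ≤ 2 * δ := by linarith
      have e3 : 0 ≤ cX / 2 := by linarith
      have e4 : g x p - g x q + (g y p - g y q) ≤ 2 * δ + 2 * δ := by linarith
      exact mul_le_mul_of_nonneg_left e4 e3
    have dd1 : dist (⟪x, (E m X) y⟫_ℂ) (⟪x, (E p X) y⟫_ℂ) ≤ cX / 2 * (2 * δ + 2 * δ) := by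
      rw [dist_eq_norm, norm_sub_rev]
      exact est m hm0 hmp
    have dd2 : dist (⟪x, (E p X) y⟫_ℂ) (⟪x, (E m' X) y⟫_ℂ) ≤ cX / 2 * (2 * δ + 2 * δ) := by
      rw [dist_eq_norm]
      exact est m' hm0' hm'p
    have tri := dist_triangle (⟪x, (E m X) y⟫_ℂ) (⟪x, (E p X) y⟫_ℂ) (⟪x, (E m' X) y⟫_ℂ)
    have hfin : (4 * (cX + 1) + 1) * δ = ε := by
      rw [hδdef]
      field_simp
    calc dist (⟪x, (E m X) y⟫_ℂ) (⟪x, (E m' X) y⟫_ℂ) ≤ _ := tri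
      _ ≤ cX / 2 * (2 * δ + 2 * δ) + cX / 2 * (2 * δ + 2 * δ) := add_le_add dd1 dd2
      _ < ε := by nlinarith
  choose L hL using hCauchy
  -- linearity and bounds for L
  have huniq : ∀ (X : M.toStarSubalgebra) (x y : K) (z : ℂ),
      Tendsto (fun l => ⟪x, (E l X) y⟫_ℂ) atTop (𝓝 z) → L X x y = z :=
    fun X x y z h => tendsto_nhds_unique (hL X x y) h
  have haddy : ∀ X x y y', L X x (y + y') = L X x y + L X x y' := by
    intro X x y y'
    refine huniq X x (y + y') _ (((hL X x y).add (hL X x y')).congr fun l => ?_)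
    rw [← inner_add_right, map_add]
  have hsmuly : ∀ X x y (s : ℂ), L X x (s • y) = s * L X x y := by
    intro X x y s
    refine huniq X x (s • y) _ (((hL X x y).const_mul s).congr fun l => ?_)
    rw [← inner_smul_right, map_smul]
  have haddx : ∀ X x x' y, L X (x + x') y = L X x y + L X x' y := by
    intro X x x' y
    refine huniq X (x + x') y _ (((hL X x y).add (hL X x' y)).congr fun l => ?_)
    rw [← inner_add_left]
  have hsmulx : ∀ X x y (s : ℂ), L X (s • x) y = (starRingEnd ℂ) s * L X x y := by
    intro X x y s
    refine huniq X (s • x) y _ (((hL X x y).const_mul ((starRingEnd ℂ) s)).congr fun l => ?_)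
    rw [← inner_smul_left]
  have haddX : ∀ X X' x y, L (X + X') x y = L X x y + L X' x y := by
    intro X X' x y
    refine huniq (X + X') x y _ (((hL X x y).add (hL X' x y)).congr fun l => ?_)
    rw [map_add, ContinuousLinearMap.add_apply, inner_add_right]
  have hsmulX : ∀ X x y (s : ℂ), L (s • X) x y = s * L X x y := by
    intro X x y s
    refine huniq (s • X) x y _ (((hL X x y).const_mul s).congr fun l => ?_)
    rw [map_smul, ContinuousLinearMap.smul_apply, inner_smul_right]
  set C : ℝ := ‖F 1‖ with hCdef
  have hC0 : 0 ≤ C := norm_nonneg _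
  have hgC : ∀ x : K, (⟪x, (F 1) x⟫_ℂ).re ≤ C * ‖x‖ ^ 2 := by
    intro x
    calc (⟪x, (F 1) x⟫_ℂ).re ≤ |(⟪x, (F 1) x⟫_ℂ).re| := le_abs_self _
      _ ≤ ‖⟪x, (F 1) x⟫_ℂ‖ := Complex.abs_re_le_norm _
      _ ≤ ‖x‖ * ‖(F 1) x‖ := norm_inner_le_norm _ _
      _ ≤ ‖x‖ * (C * ‖x‖) := by
          apply mul_le_mul_of_nonneg_left _ (norm_nonneg x)
          exact (F 1).le_opNorm x
      _ = C * ‖x‖ ^ 2 := by ring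
  have hg0 : ∀ (x : K) (l : Λ), 0 ≤ g x l := by
    intro x l
    have hpos := isPositive_inner_right (((hcp l).1).posMap onePos) x
    exact (Complex.le_def.1 hpos).1
  have hsumbd : ∀ (X : M.toStarSubalgebra) (x y : K),
      ‖L X x y‖ ≤ ‖(X : H →L[ℂ] H)‖ / 2 * (C * ‖x‖ ^ 2 + C * ‖y‖ ^ 2) := by
    intro X x y
    refine le_of_tendsto (hL X x y).norm (Filter.Eventually.of_forall fun l => ?_)
    refine le_trans (cp_inner_bound ((hcp l).1) X x y) ?_
    have hx := le_trans (hgbdd x l) (hgC x)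
    have hy := le_trans (hgbdd y l) (hgC y)
    have h0x := hg0 x l
    have h0y := hg0 y l
    have : (⟪x, (E l 1) x⟫_ℂ).re + (⟪y, (E l 1) y⟫_ℂ).re
        ≤ C * ‖x‖ ^ 2 + C * ‖y‖ ^ 2 := by
      simp only [hgdef] at hx hy
      exact add_le_add hx hy
    apply mul_le_mul_of_nonneg_left this
    positivity
  have hzero : ∀ (X : M.toStarSubalgebra) (y : K), L X 0 y = 0 := by
    intro X y
    refine huniq X 0 y 0 (tendsto_const_nhds.congr fun l => ?_)
    rw [inner_zero_left]

  have hzero' : ∀ (X : M.toStarSubalgebra) (x : K), L X x 0 = 0 := by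
    intro X x
    refine huniq X x 0 0 (tendsto_const_nhds.congr fun l => ?_)
    rw [map_zero, inner_zero_right]
  have hprod : ∀ (X : M.toStarSubalgebra) (x y : K),
      ‖L X x y‖ ≤ (‖(X : H →L[ℂ] H)‖ * C) * (‖x‖ * ‖y‖) := by
    intro X x y
    by_cases hx : x = 0
    · rw [hx, hzero, norm_zero, norm_zero]
      simp
    by_cases hy : y = 0
    · rw [hy, hzero', norm_zero, norm_zero]
      simp
    have hnx : 0 < ‖x‖ := norm_pos_iff.2 hx
    have hny : 0 < ‖y‖ := norm_pos_iff.2 hy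
    set t : ℝ := Real.sqrt (‖y‖ / ‖x‖) with htdef
    have ht : 0 < t := Real.sqrt_pos.2 (div_pos hny hnx)
    have ht2 : t ^ 2 = ‖y‖ / ‖x‖ := Real.sq_sqrt (le_of_lt (div_pos hny hnx))
    have hscale : L X ((t : ℂ) • x) ((t⁻¹ : ℂ) • y) = L X x y := by
      rw [hsmulx, hsmuly, Complex.conj_ofReal, ← mul_assoc,
        mul_inv_cancel₀ (Complex.ofReal_ne_zero.2 (ne_of_gt ht)), one_mul]
    have hb := hsumbd X ((t : ℂ) • x) ((t⁻¹ : ℂ) • y)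
    rw [hscale] at hb
    have hnorms : ‖(t : ℂ) • x‖ = t * ‖x‖ := by
      rw [norm_smul, Complex.norm_real, Real.norm_eq_abs, abs_of_pos ht]
    have hnorms' : ‖(t⁻¹ : ℂ) • y‖ = t⁻¹ * ‖y‖ := by
      rw [norm_smul, norm_inv, Complex.norm_real, Real.norm_eq_abs, abs_of_pos ht]
    rw [hnorms, hnorms'] at hb
    have hid : ‖(X : H →L[ℂ] H)‖ / 2 * (C * (t * ‖x‖) ^ 2 + C * (t⁻¹ * ‖y‖) ^ 2)
        = (‖(X : H →L[ℂ] H)‖ * C) * (‖x‖ * ‖y‖) := by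
      have h1 : (t * ‖x‖) ^ 2 = ‖y‖ * ‖x‖ := by
        rw [mul_pow, ht2]
        field_simp
      have h2 : (t⁻¹ * ‖y‖) ^ 2 = ‖x‖ * ‖y‖ := by
        rw [mul_pow, inv_pow, ht2]
        rw [show (‖y‖ / ‖x‖)⁻¹ = ‖x‖ / ‖y‖ by rw [inv_div]]
        field_simp
      rw [h1, h2]
      ring
    rw [hid] at hb
    exact hb
  -- construct the operators
  have hex : ∀ X : M.toStarSubalgebra, ∃ T : K →L[ℂ] K, ∀ x y, ⟪x, T y⟫_ℂ = L X x y := by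
    intro X
    set cb : ℝ := ‖(X : H →L[ℂ] H)‖ * C with hcbdef
    have hcb0 : 0 ≤ cb := mul_nonneg (norm_nonneg _) hC0
    have hφbd : ∀ y x : K, ‖(starRingEnd ℂ) (L X x y)‖ ≤ cb * ‖y‖ * ‖x‖ := by
      intro y x
      rw [RCLike.norm_conj]
      calc ‖L X x y‖ ≤ cb * (‖x‖ * ‖y‖) := hprod X x y
        _ = cb * ‖y‖ * ‖x‖ := by ring
    set φ : K → (K →L[ℂ] ℂ) := fun y => LinearMap.mkContinuous
      { toFun := fun x => (starRingEnd ℂ) (L X x y)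
        map_add' := fun a b => by simp only [haddx, map_add]
        map_smul' := fun s a => by
          simp only [hsmulx, map_mul, Complex.conj_conj, RingHom.id_apply, smul_eq_mul] }
      (cb * ‖y‖) (fun x => hφbd y x) with hφdef
    have hφay : ∀ y x, φ y x = (starRingEnd ℂ) (L X x y) := fun y x => rfl
    set T0 : K → K := fun y => (InnerProductSpace.toDual ℂ K).symm (φ y) with hT0def
    have hT0 : ∀ x y, ⟪x, T0 y⟫_ℂ = L X x y := by
      intro x y
      have h : ⟪T0 y, x⟫_ℂ = (starRingEnd ℂ) (L X x y) :=
        InnerProductSpace.toDual_symm_apply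
      rw [← inner_conj_symm, h, Complex.conj_conj]
    have hT0add : ∀ y y', T0 (y + y') = T0 y + T0 y' := by
      intro y y'
      apply ext_inner_left ℂ
      intro v
      rw [inner_add_right, hT0, hT0, hT0, haddy]
    have hT0smul : ∀ (s : ℂ) y, T0 (s • y) = s • T0 y := by
      intro s y
      apply ext_inner_left ℂ
      intro v
      rw [inner_smul_right, hT0, hT0, hsmuly]
    have hT0norm : ∀ y, ‖T0 y‖ ≤ cb * ‖y‖ := by
      intro y
      show ‖(InnerProductSpace.toDual ℂ K).symm (φ y)‖ ≤ cb * ‖y‖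
      rw [LinearIsometryEquiv.norm_map]
      exact LinearMap.mkContinuous_norm_le _ (mul_nonneg hcb0 (norm_nonneg y)) _
    exact ⟨LinearMap.mkContinuous
      { toFun := T0, map_add' := hT0add, map_smul' := hT0smul } cb hT0norm, hT0⟩
  choose T hT using hex
  -- the limit linear map
  set E' : M.toStarSubalgebra →ₗ[ℂ] (K →L[ℂ] K) :=
    { toFun := T
      map_add' := fun X X' => by
        apply ContinuousLinearMap.ext
        intro u
        apply ext_inner_left ℂ
        intro v
        rw [ContinuousLinearMap.add_apply, inner_add_right, hT, hT, hT, haddX]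
      map_smul' := fun s X => by
        apply ContinuousLinearMap.ext
        intro u
        apply ext_inner_left ℂ
        intro v
        rw [RingHom.id_apply, ContinuousLinearMap.smul_apply, inner_smul_right,
          hT, hT, hsmulX] } with hE'def
  have hE'inner : ∀ (X : M.toStarSubalgebra) (x y : K), ⟪x, (E' X) y⟫_ℂ = L X x y :=
    fun X x y => hT X x y
  have hconv' : ∀ (X : M.toStarSubalgebra) (x y : K),
      Tendsto (fun l => ⟪x, (E l X) y⟫_ℂ) atTop (𝓝 ⟪x, (E' X) y⟫_ℂ) := by
    intro X x y
    rw [hE'inner]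
    exact hL X x y
  clear_value E'
  clear hE'def
  -- complete positivity of the limit
  have hE'cp : IsCPMap M.toStarSubalgebra E' :=
    isCPMap_of_tendsto E E' (Filter.Eventually.of_forall fun l => (hcp l).1)
      (fun X x y => hconv' X x y)
  have hdiffcp : ∀ l, IsCPMap M.toStarSubalgebra (E' - E l) := by
    intro l
    refine isCPMap_of_tendsto (fun m => E m - E l) (E' - E l)
      ((Filter.eventually_ge_atTop l).mono fun m hm => (hmono l m hm).1) ?_
    intro X x y
    have h := (hconv' X x y).sub (tendsto_const_nhds (x := ⟪x, (E l X) y⟫_ℂ))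
    simp only [LinearMap.sub_apply, ContinuousLinearMap.sub_apply, inner_sub_right]
    exact h
  have hupcp : ∀ F' : M.toStarSubalgebra →ₗ[ℂ] (K →L[ℂ] K),
      (∀ l, IsCPMap M.toStarSubalgebra (F' - E l)) →
      IsCPMap M.toStarSubalgebra (F' - E') := by
    intro F' hF'
    refine isCPMap_of_tendsto (fun m => F' - E m) (F' - E')
      (Filter.Eventually.of_forall hF') ?_
    intro X x y
    have h := (tendsto_const_nhds (x := ⟪x, (F' X) y⟫_ℂ)).sub (hconv' X x y)
    simp only [LinearMap.sub_apply, ContinuousLinearMap.sub_apply, inner_sub_right]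
    exact h
  -- the eta quantities
  set η : K → Λ → ℝ := fun x l => (⟪x, ((E' - E l) 1) x⟫_ℂ).re with hηdef
  have hηeq : ∀ x l, η x l = (⟪x, (E' 1) x⟫_ℂ).re - g x l := by
    intro x l
    simp only [hηdef, hgdef, LinearMap.sub_apply, ContinuousLinearMap.sub_apply,
      inner_sub_right, Complex.sub_re]
  have hη0 : ∀ x l, 0 ≤ η x l := by
    intro x l
    exact (Complex.le_def.1 (isPositive_inner_right ((hdiffcp l).posMap onePos) x)).1
  have hηlim : ∀ x : K, Tendsto (fun l => η x l) atTop (𝓝 0) := by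
    intro x
    have hgx : Tendsto (g x) atTop (𝓝 ((⟪x, (E' 1) x⟫_ℂ).re)) :=
      (Complex.continuous_re.tendsto _).comp (hconv' 1 x x)
    have h := (tendsto_const_nhds (x := (⟪x, (E' 1) x⟫_ℂ).re)).sub hgx
    rw [sub_self] at h
    exact h.congr fun l => (hηeq x l).symm
  -- normality (weak* continuity) of the limit
  have hwstar : WStarCont M.toStarSubalgebra E' := by
    intro A A' cb hbA hAconv x y
    have hcb0 : 0 ≤ cb := le_trans (norm_nonneg _) (hbA 0)
    have hA'bd : ‖((A' : M.toStarSubalgebra) : H →L[ℂ] H)‖ ≤ cb := by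
      apply ContinuousLinearMap.opNorm_le_bound _ hcb0
      intro u
      have h2 := hAconv ((A' : H →L[ℂ] H) u) u
      have h3 : ‖⟪(A' : H →L[ℂ] H) u, (A' : H →L[ℂ] H) u⟫_ℂ‖
          ≤ ‖(A' : H →L[ℂ] H) u‖ * (cb * ‖u‖) := by
        refine le_of_tendsto h2.norm (Filter.Eventually.of_forall fun n => ?_)
        calc ‖⟪(A' : H →L[ℂ] H) u, ((A n : H →L[ℂ] H)) u⟫_ℂ‖
            ≤ ‖(A' : H →L[ℂ] H) u‖ * ‖(A n : H →L[ℂ] H) u‖ := norm_inner_le_norm _ _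
          _ ≤ ‖(A' : H →L[ℂ] H) u‖ * (cb * ‖u‖) := by
              apply mul_le_mul_of_nonneg_left _ (norm_nonneg _)
              calc ‖(A n : H →L[ℂ] H) u‖ ≤ ‖(A n : H →L[ℂ] H)‖ * ‖u‖ :=
                    (A n : H →L[ℂ] H).le_opNorm u
                _ ≤ cb * ‖u‖ := mul_le_mul_of_nonneg_right (hbA n) (norm_nonneg u)
      rw [inner_self_ofReal] at h3
      rw [Complex.norm_real, Real.norm_eq_abs, abs_of_nonneg (sq_nonneg _)] at h3
      nlinarith [norm_nonneg ((A' : H →L[ℂ] H) u), mul_nonneg hcb0 (norm_nonneg u)]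
    -- the 3-epsilon argument
    rw [Metric.tendsto_atTop]
    intro ε hε
    set δ : ℝ := ε / (cb + 1) with hδdef
    have hδ : 0 < δ := div_pos hε (by linarith)
    have h4 := (hηlim x).add (hηlim y)
    rw [add_zero] at h4
    obtain ⟨l, hlδ⟩ := (h4.eventually_lt_const hδ).exists
    have hmid := (hcp l).2 A A' cb hbA hAconv x y
    obtain ⟨N, hN⟩ := Filter.eventually_atTop.1 (Metric.tendsto_nhds.1 hmid δ hδ)
    refine ⟨N, fun n hn => ?_⟩
    have hbound : ∀ B : M.toStarSubalgebra, ‖(B : H →L[ℂ] H)‖ ≤ cb →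
        ‖⟪x, (E' B) y⟫_ℂ - ⟪x, (E l B) y⟫_ℂ‖ ≤ cb / 2 * δ := by
      intro B hB
      have hEq : ⟪x, (E' B) y⟫_ℂ - ⟪x, (E l B) y⟫_ℂ = ⟪x, ((E' - E l) B) y⟫_ℂ := by
        simp only [LinearMap.sub_apply, ContinuousLinearMap.sub_apply, inner_sub_right]
      rw [hEq]
      refine le_trans (cp_inner_bound (hdiffcp l) B x y) ?_
      have h2 : (⟪x, ((E' - E l) 1) x⟫_ℂ).re + (⟪y, ((E' - E l) 1) y⟫_ℂ).re
          = η x l + η y l := rfl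
      rw [h2]
      have hηsum : 0 ≤ η x l + η y l := add_nonneg (hη0 x l) (hη0 y l)
      calc ‖(B : H →L[ℂ] H)‖ / 2 * (η x l + η y l) ≤ cb / 2 * (η x l + η y l) := by
            apply mul_le_mul_of_nonneg_right _ hηsum
            linarith
        _ ≤ cb / 2 * δ := by
            apply mul_le_mul_of_nonneg_left (le_of_lt hlδ)
            linarith
    have hb1 := hbound (A n) (hbA n)
    have hb3 := hbound A' hA'bd
    have hmidn := hN n hn
    rw [dist_eq_norm] at hmidn
    have tri := dist_triangle4 (⟪x, (E' (A n)) y⟫_ℂ) (⟪x, (E l (A n)) y⟫_ℂ)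
      (⟪x, (E l A') y⟫_ℂ) (⟪x, (E' A') y⟫_ℂ)
    rw [dist_eq_norm, dist_eq_norm, dist_eq_norm, dist_eq_norm] at tri
    rw [dist_eq_norm]
    have hb3' : ‖⟪x, (E l A') y⟫_ℂ - ⟪x, (E' A') y⟫_ℂ‖ ≤ cb / 2 * δ := by
      rwa [norm_sub_rev]
    have hεeq : (cb + 1) * δ = ε := by
      rw [hδdef]
      field_simp
    calc ‖⟪x, (E' (A n)) y⟫_ℂ - ⟪x, (E' A') y⟫_ℂ‖ ≤ _ := tri
      _ < ε := by linarith
  have hE'normal : NormalCP M.toStarSubalgebra E' := ⟨hE'cp, hwstar⟩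
  -- range in N
  have hrange' : ∀ X, E' X ∈ N := by
    intro X
    have hmem : (E' X) ∈ Set.centralizer (Set.centralizer (N : Set (K →L[ℂ] K))) := by
      rw [Set.mem_centralizer_iff]
      intro gc hgc
      apply ContinuousLinearMap.ext
      intro u
      apply ext_inner_left ℂ
      intro v
      have hglcomm : ∀ l, (E l X) * gc = gc * (E l X) := by
        intro l
        exact Set.mem_centralizer_iff.1 hgc (E l X) (SetLike.mem_coe.2 (hrange l X))
      have t1 : Tendsto (fun l => ⟪(ContinuousLinearMap.adjoint gc) v, (E l X) u⟫_ℂ)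
          atTop (𝓝 ⟪(ContinuousLinearMap.adjoint gc) v, (E' X) u⟫_ℂ) :=
        hconv' X ((ContinuousLinearMap.adjoint gc) v) u
      have t2 : Tendsto (fun l => ⟪(ContinuousLinearMap.adjoint gc) v, (E l X) u⟫_ℂ)
          atTop (𝓝 ⟪v, (E' X) (gc u)⟫_ℂ) := by
        refine (hconv' X v (gc u)).congr fun l => ?_
        rw [show (E l X) (gc u) = ((E l X) * gc) u from rfl, hglcomm l,
          show (gc * (E l X)) u = gc ((E l X) u) from rfl,
          ← ContinuousLinearMap.adjoint_inner_left]
      have heq := tendsto_nhds_unique t1 t2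
      rw [show (gc * (E' X)) u = gc ((E' X) u) from rfl, ← ContinuousLinearMap.adjoint_inner_left,
        heq, show (E' X * gc) u = (E' X) (gc u) from rfl]
    have := N.centralizer_centralizer
    rw [this] at hmem
    exact hmem
  -- CP-dominance of the limit
  have hCPle : ∀ l, CPle M.toStarSubalgebra (E l) E' :=
    fun l => ⟨hdiffcp l, WStarCont.sub' hwstar (hcp l).2⟩
  have hlub : ∀ F', NormalCP M.toStarSubalgebra F' →
      (∀ l, CPle M.toStarSubalgebra (E l) F') → CPle M.toStarSubalgebra E' F' := by
    intro F' hF'n hF'le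
    exact ⟨hupcp F' (fun l => (hF'le l).1), WStarCont.sub' hF'n.2 hwstar⟩
  refine ⟨E', ⟨hE'normal, hrange', fun X x y => hconv' X x y, hCPle, hlub⟩, ?_⟩
  -- uniqueness
  intro E'' hE''
  obtain ⟨-, -, hconv'', -, -⟩ := hE''
  apply LinearMap.ext
  intro X
  apply ContinuousLinearMap.ext
  intro u
  apply ext_inner_left ℂ
  intro v
  exact tendsto_nhds_unique (hconv'' X v u) (hconv' X v u)

end QSM
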